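/- Let p be a cubic polynomial in n variables whose Hessian has the affine form ∇²p(x) = A_0 + x_1·A_1 + ... + x_n·A_n for symmetric matrices A_0, A_1, ..., A_n. Then p is convex on the nonnegative orthant ℝ_+^n if and only if every A_i (i = 0, 1, ..., n) is positive semidefinite. -/

import Mathlib

open MvPolynomial Matrix Topology Filter

private noncomputable def lineSub {n : ℕ} (x v : Fin n → ℝ) :
    MvPolynomial (Fin n) ℝ →ₐ[ℝ] Polynomial ℝ :=
  MvPolynomial.aeval (fun i => Polynomial.C (x i) + Polynomial.C (v i) * Polynomial.X)

private lemma lineSub_eval {n : ℕ} (x v : Fin n → ℝ) (p : MvPolynomial (Fin n) ℝ) (t : ℝ) :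
    (lineSub x v p).eval t = eval (fun i => x i + t * v i) p := by
  induction p using MvPolynomial.induction_on with
  | C a => simp [lineSub]
  | add p q hp hq => simp [lineSub, map_add, Polynomial.eval_add] at hp hq ⊢; rw [hp, hq]
  | mul_X p i hp =>
      simp only [lineSub, _root_.map_mul, MvPolynomial.aeval_X, Polynomial.eval_mul,
        Polynomial.eval_add, Polynomial.eval_C, Polynomial.eval_mul, Polynomial.eval_X,
        MvPolynomial.eval_mul, MvPolynomial.eval_X] at hp ⊢
      rw [hp]; ring

private lemma lineSub_derivative {n : ℕ} (x v : Fin n → ℝ) (p : MvPolynomial (Fin n) ℝ) :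
    Polynomial.derivative (lineSub x v p)
      = ∑ i, Polynomial.C (v i) * lineSub x v (pderiv i p) := by
  induction p using MvPolynomial.induction_on with
  | C a => simp [lineSub]
  | add p q hp hq => simp [map_add, hp, hq, mul_add, Finset.sum_add_distrib]
  | mul_X p i hp =>
      have hXi : lineSub x v (X i) = Polynomial.C (x i) + Polynomial.C (v i) * Polynomial.X := by
        simp [lineSub]
      have hder : Polynomial.derivative (Polynomial.C (x i) + Polynomial.C (v i) * Polynomial.X)
          = Polynomial.C (v i) := by simp
      have e : ∀ j : Fin n, Polynomial.C (v j) * lineSub x v (pderiv j (p * X i))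
          = Polynomial.C (v j) * lineSub x v (pderiv j p)
              * (Polynomial.C (x i) + Polynomial.C (v i) * Polynomial.X)
            + (if j = i then Polynomial.C (v i) * lineSub x v p else 0) := by
        intro j
        rw [pderiv_mul]
        by_cases hj : j = i
        · subst hj
          rw [pderiv_X_self]
          simp only [map_add, _root_.map_mul, hXi, _root_.map_one, mul_one, eq_self_iff_true, if_true]
          ring
        · rw [pderiv_X_of_ne (Ne.symm hj)]
          simp only [map_add, _root_.map_mul, hXi, _root_.map_zero, mul_zero, add_zero, if_neg hj]
          ring
      rw [_root_.map_mul, hXi, Polynomial.derivative_mul, hp, hder,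
        Finset.sum_congr rfl (fun j _ => e j), Finset.sum_add_distrib,
        Finset.sum_ite_eq' Finset.univ i, ← Finset.sum_mul]
      simp only [Finset.mem_univ, if_pos]
      ring

private lemma lineSub_deriv2_eval {n : ℕ} (x v : Fin n → ℝ) (p : MvPolynomial (Fin n) ℝ) (t : ℝ) :
    (Polynomial.derivative (Polynomial.derivative (lineSub x v p))).eval t
      = ∑ i, v i * ∑ j, v j * eval (fun k => x k + t * v k) (pderiv j (pderiv i p)) := by
  rw [lineSub_derivative, map_sum]
  have h : ∀ i : Fin n, Polynomial.derivative (Polynomial.C (v i) * lineSub x v (pderiv i p))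
      = Polynomial.C (v i) * ∑ j, Polynomial.C (v j) * lineSub x v (pderiv j (pderiv i p)) := by
    intro i
    rw [Polynomial.derivative_mul, Polynomial.derivative_C, zero_mul, zero_add,
      lineSub_derivative]
  rw [Finset.sum_congr rfl fun i _ => h i]
  simp [Polynomial.eval_finset_sum, lineSub_eval, Finset.mul_sum]

private lemma aux_lin {c s : ℝ} (h : ∀ t : ℝ, 0 < t → 0 ≤ c + t * s) : 0 ≤ c ∧ 0 ≤ s := by
  constructor
  · by_contra hc; push_neg at hc
    have hε : 0 < -c / (|s| + 1) := div_pos (by linarith) (by positivity)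
    have h1 := h _ hε
    have h2 : (-c / (|s| + 1)) * s ≤ (-c / (|s| + 1)) * |s| :=
      mul_le_mul_of_nonneg_left (le_abs_self s) (le_of_lt hε)
    have h3 : (-c / (|s| + 1)) * (|s| + 1) = -c := by
      field_simp
    nlinarith [abs_nonneg s]
  · by_contra hs; push_neg at hs
    have ht : 0 < (|c| + 1) / (-s) := div_pos (by positivity) (by linarith)
    have h1 := h _ ht
    have h3 : ((|c| + 1) / (-s)) * s = -(|c| + 1) := by
      rw [div_mul_eq_mul_div, div_eq_iff (by linarith : (-s) ≠ 0)]
      ring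
    nlinarith [le_abs_self c]

theorem stmt5 (n : ℕ) (p : MvPolynomial (Fin n) ℝ)
    (hdeg : p.totalDegree ≤ 3)
    (A0 : Matrix (Fin n) (Fin n) ℝ) (A : Fin n → Matrix (Fin n) (Fin n) ℝ)
    (hA0 : A0.IsSymm) (hA : ∀ l, (A l).IsSymm)
    (hHess : ∀ (x : Fin n → ℝ) (i j : Fin n),
      eval x (pderiv i (pderiv j p)) = (A0 + ∑ l, x l • A l) i j) :
    ConvexOn ℝ {x : Fin n → ℝ | ∀ j, 0 ≤ x j} (fun x => eval x p) ↔
      A0.PosSemidef ∧ ∀ l, (A l).PosSemidef := by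
  classical
  have quad : ∀ (z w : Fin n → ℝ),
      (∑ i, w i * ∑ j, w j * eval z (pderiv j (pderiv i p)))
        = w ⬝ᵥ ((A0 + ∑ l, z l • A l) *ᵥ w) := by
    intro z w
    simp only [hHess, dotProduct, mulVec, Finset.mul_sum]
    rw [Finset.sum_comm]
    exact Finset.sum_congr rfl fun j _ => Finset.sum_congr rfl fun i _ => by ring
  have expand : ∀ (z w : Fin n → ℝ), w ⬝ᵥ ((A0 + ∑ l, z l • A l) *ᵥ w)
      = w ⬝ᵥ (A0 *ᵥ w) + ∑ l, z l * (w ⬝ᵥ (A l *ᵥ w)) := by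
    intro z w
    rw [Matrix.add_mulVec, dotProduct_add]
    congr 1
    have h1 : (∑ l, z l • A l) *ᵥ w = ∑ l, z l • (A l *ᵥ w) := by
      ext j
      simp only [mulVec, dotProduct, Matrix.sum_apply, Matrix.smul_apply, smul_eq_mul,
        Finset.sum_apply, Pi.smul_apply, Finset.sum_mul, Finset.mul_sum]
      rw [Finset.sum_comm]
      exact Finset.sum_congr rfl fun l _ => Finset.sum_congr rfl fun i _ => by ring
    rw [h1]
    simp only [dotProduct, Finset.sum_apply, Pi.smul_apply, smul_eq_mul, Finset.mul_sum]
    rw [Finset.sum_comm]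
    exact Finset.sum_congr rfl fun l _ => Finset.sum_congr rfl fun j _ => by ring
  -- second derivative of the restriction to a line, as a quadratic form
  have deriv2 : ∀ (x v : Fin n → ℝ) (t : ℝ),
      (Polynomial.derivative (Polynomial.derivative (lineSub x v p))).eval t
        = v ⬝ᵥ ((A0 + ∑ l, (x l + t * v l) • A l) *ᵥ v) := by
    intro x v t
    rw [lineSub_deriv2_eval]
    exact quad (fun k => x k + t * v k) v
  constructor
  · -- convex → PSD
    intro hconv
    -- quadratic form nonneg at strictly positive points
    have key : ∀ (z v : Fin n → ℝ), (∀ j, 0 < z j) →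
        0 ≤ v ⬝ᵥ ((A0 + ∑ l, z l • A l) *ᵥ v) := by
      intro z v hz
      set q := lineSub z v p with hq
      have hgt : ∀ t : ℝ, q.eval t = eval (z + t • v) p := by
        intro t
        have hfe : (fun i => z i + t * v i) = z + t • v := by
          funext k; simp
        rw [hq, lineSub_eval, hfe]
      have hev : ∀ᶠ h : ℝ in 𝓝 (0:ℝ),
          (∀ j, 0 ≤ z j + h * v j) ∧ (∀ j, 0 ≤ z j + (-h) * v j) := by
        have H : ∀ (w : Fin n → ℝ) (j : Fin n), ∀ᶠ h : ℝ in 𝓝 (0:ℝ), 0 ≤ z j + h * w j := by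
          intro w j
          have hc : Filter.Tendsto (fun h : ℝ => z j + h * w j) (𝓝 0) (𝓝 (z j)) := by
            have h2 : Filter.Tendsto (fun h : ℝ => z j + h * w j) (𝓝 0)
                (𝓝 (z j + 0 * w j)) :=
              Filter.Tendsto.add tendsto_const_nhds
                ((continuous_id.mul continuous_const).tendsto 0)
            simpa using h2
          exact hc.eventually (eventually_ge_nhds (hz j))
        refine (Filter.eventually_all.2 fun j => H v j).and
          ((Filter.eventually_all.2 fun j => H (-v) j).mono fun h hh j => ?_)
        have := hh j
        simpa [neg_mul, mul_neg] using this
      have hmid : ∀ᶠ h : ℝ in 𝓝 (0:ℝ), 0 ≤ q.eval h + q.eval (-h) - 2 * q.eval 0 := by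
        filter_upwards [hev] with h hh
        have hmem1 : (z + h • v) ∈ {x : Fin n → ℝ | ∀ j, 0 ≤ x j} := by
          intro j; simpa using hh.1 j
        have hmem2 : (z + (-h) • v) ∈ {x : Fin n → ℝ | ∀ j, 0 ≤ x j} := by
          intro j; simpa using hh.2 j
        have hc2 := hconv.2 hmem1 hmem2 (by norm_num : (0:ℝ) ≤ 1/2)
          (by norm_num : (0:ℝ) ≤ 1/2) (by norm_num)
        have hzz : (1/2 : ℝ) • (z + h • v) + (1/2 : ℝ) • (z + (-h) • v) = z := by
          funext k
          simp only [Pi.add_apply, Pi.smul_apply, smul_eq_mul, Pi.neg_apply]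
          ring
        rw [hzz] at hc2
        simp only [smul_eq_mul] at hc2
        have e0 : q.eval 0 = eval z p := by
          have hz0 : z + (0:ℝ) • v = z := by simp
          rw [hgt, hz0]
        rw [hgt h, hgt (-h), e0]
        linarith
      set ψ : Polynomial ℝ := q + q.comp (-Polynomial.X) - Polynomial.C (2 * q.eval 0) with hψ
      have hψeval : ∀ h : ℝ, ψ.eval h = q.eval h + q.eval (-h) - 2 * q.eval 0 := by
        intro h; simp [hψ, Polynomial.eval_comp]
      have hdψ : Polynomial.derivative ψ
          = Polynomial.derivative q
            + (-1) * (Polynomial.derivative q).comp (-Polynomial.X) := by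
        simp [hψ, Polynomial.derivative_comp]
      have hddψ : Polynomial.derivative (Polynomial.derivative ψ)
          = Polynomial.derivative (Polynomial.derivative q)
            + (Polynomial.derivative (Polynomial.derivative q)).comp (-Polynomial.X) := by
        rw [hdψ]
        simp [Polynomial.derivative_comp]
      have hc0 : ψ.coeff 0 = 0 := by
        rw [Polynomial.coeff_zero_eq_eval_zero, hψeval]
        ring
      have hc1 : ψ.coeff 1 = 0 := by
        have h0 := Polynomial.coeff_derivative ψ 0
        norm_num at h0
        rw [Polynomial.coeff_zero_eq_eval_zero, hdψ] at h0
        simp [Polynomial.eval_comp] at h0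
        linarith
      have hc2 : ψ.coeff 2 = (Polynomial.derivative (Polynomial.derivative q)).eval 0 := by
        have h1 := Polynomial.coeff_derivative ψ 1
        norm_num at h1
        have h2 := Polynomial.coeff_derivative (Polynomial.derivative ψ) 0
        norm_num at h2
        rw [Polynomial.coeff_zero_eq_eval_zero, hddψ] at h2
        simp [Polynomial.eval_comp] at h2
        push_cast at h1
        linarith
      have hdvd : Polynomial.X ^ 2 ∣ ψ := by
        rw [Polynomial.X_pow_dvd_iff]
        intro d hd
        interval_cases d
        · exact hc0
        · exact hc1
      obtain ⟨χ, hχ⟩ := hdvd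
      have hχ0coeff : χ.coeff 0 = ψ.coeff 2 := by
        rw [hχ]
        have := Polynomial.coeff_X_pow_mul χ 2 0
        simpa using this.symm
      have hχnn : ∀ᶠ h : ℝ in 𝓝[≠] (0:ℝ), 0 ≤ χ.eval h := by
        filter_upwards [hmid.filter_mono nhdsWithin_le_nhds, self_mem_nhdsWithin] with h h1 h2
        have he : ψ.eval h = h ^ 2 * χ.eval h := by rw [hχ]; simp
        have hne : h ≠ 0 := h2
        have hp2 : 0 < h ^ 2 := pow_two_pos_of_ne_zero hne
        have hψh : 0 ≤ h ^ 2 * χ.eval h := by rw [← he, hψeval]; linarith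
        nlinarith
      have hχ0 : 0 ≤ χ.eval 0 :=
        ge_of_tendsto ((Polynomial.continuous χ).continuousAt.continuousWithinAt) hχnn
      have hfin : 0 ≤ (Polynomial.derivative (Polynomial.derivative q)).eval 0 := by
        rw [← hc2, ← hχ0coeff, Polynomial.coeff_zero_eq_eval_zero]
        exact hχ0
      rw [hq] at hfin
      rw [deriv2 z v 0] at hfin
      simpa using hfin
    have key' : ∀ (z v : Fin n → ℝ), (∀ j, 0 ≤ z j) →
        0 ≤ v ⬝ᵥ ((A0 + ∑ l, z l • A l) *ᵥ v) := by
      intro z v hz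
      have hall : ∀ t : ℝ, 0 < t →
          0 ≤ (v ⬝ᵥ (A0 *ᵥ v) + ∑ l, z l * (v ⬝ᵥ (A l *ᵥ v)))
            + t * ∑ l, (v ⬝ᵥ (A l *ᵥ v)) := by
        intro t ht
        have hk := key (fun l => z l + t) v (fun j => by
          have := hz j; linarith)
        rw [expand] at hk
        calc (0:ℝ) ≤ v ⬝ᵥ (A0 *ᵥ v) + ∑ l, (z l + t) * (v ⬝ᵥ (A l *ᵥ v)) := hk
        _ = (v ⬝ᵥ (A0 *ᵥ v) + ∑ l, z l * (v ⬝ᵥ (A l *ᵥ v)))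
              + t * ∑ l, (v ⬝ᵥ (A l *ᵥ v)) := by
            rw [Finset.mul_sum]
            rw [show (∑ l, (z l + t) * (v ⬝ᵥ (A l *ᵥ v)))
                = ∑ l, (z l * (v ⬝ᵥ (A l *ᵥ v)) + t * (v ⬝ᵥ (A l *ᵥ v))) from
              Finset.sum_congr rfl fun l _ => by ring, Finset.sum_add_distrib]
            ring
      have := (aux_lin hall).1
      rw [expand]
      exact this
    constructor
    · refine Matrix.PosSemidef.of_dotProduct_mulVec_nonneg ?_ fun v => ?_
      · rw [Matrix.IsHermitian, Matrix.conjTranspose_eq_transpose_of_trivial]; exact hA0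
      · have h0 := key' (fun _ => 0) v (fun j => le_refl 0)
        rw [expand] at h0
        simpa using h0
    · intro l0
      refine Matrix.PosSemidef.of_dotProduct_mulVec_nonneg ?_ fun v => ?_
      · rw [Matrix.IsHermitian, Matrix.conjTranspose_eq_transpose_of_trivial]; exact hA l0
      · have hall : ∀ t : ℝ, 0 < t →
            0 ≤ (v ⬝ᵥ (A0 *ᵥ v)) + t * (v ⬝ᵥ (A l0 *ᵥ v)) := by
          intro t ht
          have hk := key' (fun l => if l = l0 then t else 0) v (fun j => by
            split
            · linarith
            · exact le_rfl)
          rw [expand] at hk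
          have hsum : (∑ l, (if l = l0 then t else 0) * (v ⬝ᵥ (A l *ᵥ v)))
              = t * (v ⬝ᵥ (A l0 *ᵥ v)) := by
            rw [Finset.sum_congr rfl (fun l _ => show
                (if l = l0 then t else 0) * (v ⬝ᵥ (A l *ᵥ v))
                  = if l = l0 then t * (v ⬝ᵥ (A l0 *ᵥ v)) else 0 from by
              split <;> simp_all),
              Finset.sum_ite_eq' Finset.univ l0]
            simp
          rw [hsum] at hk
          exact hk
        have := (aux_lin hall).2
        simpa using this
  · -- PSD → convex
    rintro ⟨hA0psd, hApsd⟩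
    constructor
    · intro x hx y hy a b ha hb hab j
      simp only [Pi.add_apply, Pi.smul_apply, smul_eq_mul]
      exact add_nonneg (mul_nonneg ha (hx j)) (mul_nonneg hb (hy j))
    · intro x hx y hy a b ha hb hab
      set v : Fin n → ℝ := y - x with hv
      set q := lineSub x v p with hq
      have hgt : ∀ t : ℝ, q.eval t = eval (x + t • v) p := by
        intro t
        have hfe : (fun i => x i + t * v i) = x + t • v := by
          funext k; simp
        rw [hq, lineSub_eval, hfe]
      have hd1 : deriv (fun t => q.eval t) = fun t => (Polynomial.derivative q).eval t := by
        funext s; simp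
      have hconv1 : ConvexOn ℝ (Set.Icc (0:ℝ) 1) (fun t => q.eval t) := by
        apply convexOn_of_deriv2_nonneg (convex_Icc 0 1)
        · exact (Polynomial.continuous_aeval q).continuousOn
        · exact (q.differentiable).differentiableOn
        · rw [hd1]
          exact (Polynomial.differentiable _).differentiableOn
        · intro t ht
          have hiter : deriv^[2] (fun t => q.eval t) =
              fun t => (Polynomial.derivative (Polynomial.derivative q)).eval t := by
            have h2 : deriv (fun t => (Polynomial.derivative q).eval t)
                = fun t => (Polynomial.derivative (Polynomial.derivative q)).eval t := by
              funext s; simp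
            show deriv (deriv (fun t => q.eval t)) = _
            rw [hd1, h2]
          simp only [hiter]
          rw [hq, deriv2 x v t, expand]
          rw [interior_Icc] at ht
          have hz : ∀ l, 0 ≤ x l + t * v l := by
            intro l
            have h1 := hx l
            have h2 := hy l
            have h3 := ht.1
            have h4 := ht.2
            simp only [hv, Pi.sub_apply]
            nlinarith
          have h1 : 0 ≤ v ⬝ᵥ (A0 *ᵥ v) := by simpa using hA0psd.dotProduct_mulVec_nonneg v
          have h2 : 0 ≤ ∑ l, (x l + t * v l) * (v ⬝ᵥ (A l *ᵥ v)) :=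
            Finset.sum_nonneg fun l _ =>
              mul_nonneg (hz l) (by simpa using (hApsd l).dotProduct_mulVec_nonneg v)
          linarith
      have h0m : (0:ℝ) ∈ Set.Icc (0:ℝ) 1 := by norm_num
      have h1m : (1:ℝ) ∈ Set.Icc (0:ℝ) 1 := by norm_num
      have hcc := hconv1.2 h0m h1m ha hb hab
      simp only [smul_eq_mul, mul_zero, mul_one, zero_add] at hcc
      have e0 : q.eval 0 = eval x p := by
        have : x + (0:ℝ) • v = x := by simp
        rw [hgt, this]
      have e1 : q.eval 1 = eval y p := by
        have : x + (1:ℝ) • v = y := by funext k; simp [hv]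
        rw [hgt, this]
      have eb : q.eval b = eval (a • x + b • y) p := by
        have hxy : x + b • v = a • x + b • y := by
          funext k
          simp only [Pi.add_apply, Pi.smul_apply, smul_eq_mul, hv, Pi.sub_apply]
          linear_combination x k * hab.symm
        rw [hgt, hxy]
      rw [e0, e1, eb] at hcc
      simpa using hcc
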